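/- Let P, Q be real polynomials. Suppose all roots of P are real, and there exists c > 0 with |Q(t)| ≤ c·|P(t)| for all real t. Then Q is a scalar multiple of P; moreover, if deg Q < deg P, then Q = 0. -/

import Mathlib

open Polynomial Filter

-- key analytic lemma
lemma mult_le_of_bound {P Q : Polynomial ℝ} (hQ : Q ≠ 0) {c : ℝ}
    (hbound : ∀ t : ℝ, |Q.eval t| ≤ c * |P.eval t|) (a : ℝ) :
    P.rootMultiplicity a ≤ Q.rootMultiplicity a := by
  by_contra hlt
  push_neg at hlt
  set m := P.rootMultiplicity a
  set n := Q.rootMultiplicity a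
  set P₁ := P /ₘ (X - C a) ^ m with hP₁def
  set Q₁ := Q /ₘ (X - C a) ^ n with hQ₁def
  have hQ₁ : Q₁.eval a ≠ 0 := eval_divByMonic_pow_rootMultiplicity_ne_zero a hQ
  have hPfac := P.pow_mul_divByMonic_rootMultiplicity_eq a
  have hQfac := Q.pow_mul_divByMonic_rootMultiplicity_eq a
  -- pointwise inequality for t ≠ a
  have key : ∀ t : ℝ, t ≠ a → |Q₁.eval t| ≤ c * (|t - a| ^ (m - n) * |P₁.eval t|) := by
    intro t ht
    have hb := hbound t
    have hPe : P.eval t = (t - a) ^ m * P₁.eval t := by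
      conv_lhs => rw [← hPfac]
      simp [eval_mul, eval_pow]
      rfl
    have hQe : Q.eval t = (t - a) ^ n * Q₁.eval t := by
      conv_lhs => rw [← hQfac]
      simp [eval_mul, eval_pow]
      rfl
    rw [hPe, hQe, abs_mul, abs_mul, abs_pow, abs_pow] at hb
    have hta : 0 < |t - a| := abs_pos.2 (sub_ne_zero.2 ht)
    have hpow : 0 < |t - a| ^ n := pow_pos hta n
    have : |t - a| ^ m = |t - a| ^ n * |t - a| ^ (m - n) := by
      rw [← pow_add]
      congr 1
      omega
    rw [this] at hb
    refine le_of_mul_le_mul_left ?_ hpow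
    calc |t - a| ^ n * |Q₁.eval t| ≤ c * (|t - a| ^ n * |t - a| ^ (m - n) * |P₁.eval t|) := hb
      _ = |t - a| ^ n * (c * (|t - a| ^ (m - n) * |P₁.eval t|)) := by ring
  -- limits
  have hcont1 : Filter.Tendsto (fun t => |Q₁.eval t|) (nhdsWithin a {a}ᶜ) (nhds |Q₁.eval a|) :=
    ((continuous_abs.comp Q₁.continuous).tendsto a).mono_left nhdsWithin_le_nhds
  have hcont2 : Filter.Tendsto (fun t => c * (|t - a| ^ (m - n) * |P₁.eval t|))
      (nhdsWithin a {a}ᶜ) (nhds 0) := by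
    have : Filter.Tendsto (fun t => c * (|t - a| ^ (m - n) * |P₁.eval t|)) (nhds a)
        (nhds (c * (|a - a| ^ (m - n) * |P₁.eval a|))) := by
      exact (continuous_const.mul (((continuous_abs.comp (continuous_id.sub
        continuous_const)).pow _).mul (continuous_abs.comp P₁.continuous))).tendsto a
    have h0 : c * (|a - a| ^ (m - n) * |P₁.eval a|) = 0 := by
      rw [sub_self, abs_zero, zero_pow (Nat.sub_ne_zero_of_lt hlt)]; ring
    rw [← h0]
    exact this.mono_left nhdsWithin_le_nhds
  have hle : |Q₁.eval a| ≤ 0 := by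
    refine le_of_tendsto_of_tendsto hcont1 hcont2 ?_
    filter_upwards [self_mem_nhdsWithin] with t ht
    exact key t ht
  exact hQ₁ (abs_nonpos_iff.1 hle ▸ rfl) |>.elim

theorem poly_dominated_by_real_rooted {P Q : Polynomial ℝ} (hP : P ≠ 0)
    (hroots : ∀ z ∈ (P.map (algebraMap ℝ ℂ)).roots, z.im = 0)
    (c : ℝ) (hc : 0 < c) (hbound : ∀ t : ℝ, |Q.eval t| ≤ c * |P.eval t|) :
    (∃ k : ℝ, Q = k • P) ∧ (Q.degree < P.degree → Q = 0) := by
  by_cases hQ : Q = 0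
  · exact ⟨⟨0, by simp [hQ]⟩, fun _ => hQ⟩
  set f := algebraMap ℝ ℂ
  obtain ⟨s, hs_map, hscard⟩ : ∃ s : Multiset ℝ,
      s.map f = (P.map f).roots ∧ Multiset.card s = P.natDegree := by
    refine ⟨(P.map f).roots.map Complex.re, ?_, ?_⟩
    · rw [Multiset.map_map]
      conv_rhs => rw [← Multiset.map_id ((P.map f).roots)]
      refine Multiset.map_congr rfl fun z hz => ?_
      have him := hroots z hz
      apply Complex.ext <;> simp [him, f]
    · rw [Multiset.card_map]
      exact ((natDegree_map f).symm.trans (IsAlgClosed.splits (P.map f)).natDegree_eq_card_roots).symm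
  set T : Polynomial ℝ := (s.map fun a => X - C a).prod with hT_def
  have hTmonic : T.Monic := monic_multiset_prod_of_monic _ _ fun a _ => monic_X_sub_C a
  have hTdvdP : T ∣ P := by
    rw [← Polynomial.map_dvd_map' f]
    have hTm : T.map f = ((s.map f).map fun z => X - C z).prod := by
      rw [hT_def, Polynomial.map_multiset_prod, Multiset.map_map, Multiset.map_map]
      exact congrArg _ (Multiset.map_congr rfl fun a _ => by simp)
    rw [hTm, hs_map]
    exact prod_multiset_X_sub_C_dvd _
  have hsleP : s ≤ P.roots := (Multiset.prod_X_sub_C_dvd_iff_le_roots hP s).1 hTdvdP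
  have hTdvdQ : T ∣ Q := by
    rw [hT_def, Multiset.prod_X_sub_C_dvd_iff_le_roots hQ s]
    refine Multiset.le_iff_count.2 fun a => ?_
    calc Multiset.count a s ≤ Multiset.count a P.roots := Multiset.le_iff_count.1 hsleP a
      _ = P.rootMultiplicity a := count_roots P
      _ ≤ Q.rootMultiplicity a := mult_le_of_bound hQ hbound a
      _ = Multiset.count a Q.roots := (count_roots Q).symm
  have hTdeg : T.natDegree = P.natDegree := by
    rw [hT_def, natDegree_multiset_prod_X_sub_C_eq_card, hscard]
  have hPdvdQ : P ∣ Q := by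
    obtain ⟨R, hR⟩ := hTdvdP
    obtain ⟨S, hS⟩ := hTdvdQ
    have hR0 : R ≠ 0 := fun h => hP (by simp [hR, h])
    have hdeg : R.natDegree = 0 := by
      have h1 := natDegree_mul hTmonic.ne_zero hR0
      rw [← hR, hTdeg] at h1
      omega
    obtain ⟨r, rfl⟩ : ∃ r, R = C r := ⟨R.coeff 0, Polynomial.eq_C_of_natDegree_eq_zero hdeg⟩
    have hr : r ≠ 0 := fun h => hR0 (by simp [h])
    have hru : C r * C r⁻¹ = 1 := by rw [← C_mul, mul_inv_cancel₀ hr, C_1]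
    refine ⟨C r⁻¹ * S, ?_⟩
    calc Q = T * S := hS
      _ = T * C r * (C r⁻¹ * S) := by
          rw [mul_assoc, ← mul_assoc (C r), hru, one_mul]
      _ = P * (C r⁻¹ * S) := by rw [← hR]
  obtain ⟨R, hQPR⟩ := hPdvdQ
  have hRbound : ∀ᶠ t in Filter.atTop, |R.eval t| ≤ c := by
    filter_upwards [Polynomial.eventually_no_roots P hP] with t ht
    have hb := hbound t
    rw [hQPR, eval_mul, abs_mul] at hb
    have hPt : 0 < |P.eval t| := abs_pos.2 ht
    refine le_of_mul_le_mul_left ?_ hPt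
    linarith [hb]
  have hRdeg : ¬0 < R.degree := by
    intro h
    have h2 := (Polynomial.abs_tendsto_atTop R h).eventually_gt_atTop c
    obtain ⟨t, h3, h4⟩ := (h2.and hRbound).exists
    linarith
  obtain ⟨k, rfl⟩ : ∃ k, R = C k :=
    ⟨R.coeff 0, Polynomial.eq_C_of_degree_le_zero (not_lt.1 hRdeg)⟩
  have hQform : Q = k • P := by
    rw [hQPR, Polynomial.smul_eq_C_mul, mul_comm]
  refine ⟨⟨k, hQform⟩, fun hlt => ?_⟩
  by_cases hk : k = 0
  · rw [hQform, hk, zero_smul]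
  · exfalso
    rw [hQform, Polynomial.smul_eq_C_mul, Polynomial.degree_C_mul (hk)] at hlt
    exact lt_irrefl _ hlt
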